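/- Let (Ω,F,P) be a probability space and R = { φ : Ω → [0,1] measurable }. Let Z be a nonempty family of pairs (z₀, ζ) with z₀ ∈ R^d and ζ : Ω → R^d bounded measurable with nonnegative components, and let H : Ω → R^d be a bounded measurable random vector with nonnegative components. Define Γ(G) = { v ∈ R^d : ⟨z₀, v⟩ ≥ E[⟨ζ, G⟩] for all (z₀,ζ) ∈ Z } for each bounded claim G. Fix v₀ with 0 ∈ {φ ∈ R : v₀ ∈ Γ(Hφ)}. Then there exists φ̃ ∈ R with v₀ ∈ Γ(Hφ̃) maximizing E[φ] over { φ ∈ R : v₀ ∈ Γ(Hφ) } (attainment of the supremum). -/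

import Mathlib

open MeasureTheory
open scoped RealInnerProductSpace ENNReal

section Aux

variable {α : Type*} [MeasurableSpace α] {μ : Measure α}

private lemma L2inner_eq (f g : Lp ℝ 2 μ) :
    ⟪f, g⟫ = ∫ ω, f ω * g ω ∂μ := by
  rw [MeasureTheory.L2.inner_def]
  refine integral_congr_ae (Filter.Eventually.of_forall fun ω => ?_)
  simp [RCLike.inner_apply, starRingEnd_apply, star_trivial, mul_comm]

private lemma inner_toLp_eq (f : Lp ℝ 2 μ) {v : α → ℝ} (hv : MemLp v 2 μ) :
    ⟪f, hv.toLp v⟫ = ∫ ω, f ω * v ω ∂μ := by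
  rw [L2inner_eq]
  exact integral_congr_ae ((hv.coeFn_toLp).mono fun ω h => by simp only [h])

private lemma toLp_inner_toLp {u v : α → ℝ} (hu : MemLp u 2 μ) (hv : MemLp v 2 μ) :
    ⟪hu.toLp u, hv.toLp v⟫ = ∫ ω, u ω * v ω ∂μ := by
  rw [inner_toLp_eq]
  exact integral_congr_ae ((hu.coeFn_toLp).mono fun ω h => by simp only [h])

private lemma null_of_setIntegral_nonpos {s : Set α} {u : α → ℝ}
    (hs : MeasurableSet s) (hint : IntegrableOn u s μ) (hpos : ∀ x ∈ s, 0 < u x)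
    (hle : ∫ x in s, u x ∂μ ≤ 0) : μ s = 0 := by
  have h0 : ∫ x in s, u x ∂μ = 0 :=
    le_antisymm hle (setIntegral_nonneg hs fun x hx => (hpos x hx).le)
  have hae : u =ᵐ[μ.restrict s] 0 :=
    (integral_eq_zero_iff_of_nonneg_ae
      ((ae_restrict_iff' hs).2 (Filter.Eventually.of_forall fun x hx => (hpos x hx).le))
      hint).mp h0
  have hnull : μ.restrict s {x | ¬ u x = 0} = 0 := ae_iff.1 hae
  have hsub : s ⊆ {x | ¬ u x = 0} := fun x hx => ne_of_gt (hpos x hx)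
  have : μ.restrict s s = 0 := measure_mono_null hsub hnull
  rwa [Measure.restrict_apply_self] at this

end Aux

/-- existence of a success function `φ̃` maximizing effectiveness
`E[φ]` over all `φ ∈ R = {φ : Ω → [0,1] measurable}` with `v₀ ∈ Γ(Hφ)`, where
`Γ(G) = { v : ⟨z₀,v⟩ ≥ E⟨ζ,G⟩ for all (z₀,ζ) ∈ Z }`. -/
theorem exists_optimal_success_function {d : ℕ} {Ω : Type*} [MeasureSpace Ω]
    [IsProbabilityMeasure (volume : Measure Ω)]
    (H : Ω → Fin d → ℝ) (hHmeas : Measurable H)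
    (CH : ℝ) (hHbd : ∀ ω i, |H ω i| ≤ CH) (hHnn : ∀ ω i, 0 ≤ H ω i)
    (Z : Set ((Fin d → ℝ) × (Ω → Fin d → ℝ))) (hZne : Z.Nonempty)
    (hZmeas : ∀ p ∈ Z, Measurable p.2)
    (hZbd : ∀ p ∈ Z, ∃ C : ℝ, ∀ ω i, |p.2 ω i| ≤ C)
    (hZnn : ∀ p ∈ Z, ∀ ω i, 0 ≤ p.2 ω i)
    (v₀ : Fin d → ℝ)
    (hv₀ : ∀ p ∈ Z, (0 : ℝ) ≤ ∑ i, p.1 i * v₀ i) :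
    ∃ φ : Ω → ℝ, Measurable φ ∧ (∀ ω, φ ω ∈ Set.Icc (0 : ℝ) 1) ∧
      (∀ p ∈ Z, ∫ ω, ∑ i, p.2 ω i * (φ ω * H ω i) ≤ ∑ i, p.1 i * v₀ i) ∧
      ∀ ψ : Ω → ℝ, Measurable ψ → (∀ ω, ψ ω ∈ Set.Icc (0 : ℝ) 1) →
        (∀ p ∈ Z, ∫ ω, ∑ i, p.2 ω i * (ψ ω * H ω i) ≤ ∑ i, p.1 i * v₀ i) →
        ∫ ω, ψ ω ≤ ∫ ω, φ ω := by
  classical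
  set μ : Measure Ω := volume with hμdef
  set E := Lp ℝ 2 μ with hEdef
  set c : (Fin d → ℝ) × (Ω → Fin d → ℝ) → ℝ := fun p => ∑ i, p.1 i * v₀ i with hcdef
  -- the aggregated constraint integrands
  set G : (Fin d → ℝ) × (Ω → Fin d → ℝ) → Ω → ℝ :=
    fun p ω => ∑ i, p.2 ω i * H ω i with hGdef
  have hGmeas : ∀ p ∈ Z, Measurable (G p) := by
    intro p hp
    exact Finset.measurable_sum _ fun i _ =>
      ((measurable_pi_apply i).comp (hZmeas p hp)).mul ((measurable_pi_apply i).comp hHmeas)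
  have hGmem : ∀ p ∈ Z, MemLp (G p) 2 μ := by
    intro p hp
    obtain ⟨Cp, hCp⟩ := hZbd p hp
    refine MemLp.of_bound (hGmeas p hp).aestronglyMeasurable
      ((d : ℝ) * (max Cp 0 * max CH 0)) (Filter.Eventually.of_forall fun ω => ?_)
    rw [Real.norm_eq_abs]
    calc |∑ i, p.2 ω i * H ω i| ≤ ∑ i, |p.2 ω i * H ω i| := Finset.abs_sum_le_sum_abs _ _
      _ ≤ ∑ _i : Fin d, max Cp 0 * max CH 0 := by
          refine Finset.sum_le_sum fun i _ => ?_
          rw [abs_mul]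
          exact mul_le_mul ((hCp ω i).trans (le_max_left _ _))
            ((hHbd ω i).trans (le_max_left _ _)) (abs_nonneg _)
            (le_max_right _ _)
      _ = (d : ℝ) * (max Cp 0 * max CH 0) := by
          rw [Finset.sum_const, Finset.card_univ, Fintype.card_fin, nsmul_eq_mul]
  have honem : MemLp (fun _ : Ω => (1 : ℝ)) 2 μ := memLp_const 1
  set oneE : E := honem.toLp _ with honedef
  -- the feasible set in the weak dual
  set S2 : Set (WeakDual ℝ E) :=
    {x' | ∀ g : E, (0 : Ω → ℝ) ≤ᵐ[μ] g → x' g ∈ Set.Icc 0 (∫ ω, g ω ∂μ)} with hS2def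
  set S3 : Set (WeakDual ℝ E) :=
    {x' | ∀ p, ∀ hp : p ∈ Z, x' ((hGmem p hp).toLp _) ≤ c p} with hS3def
  have hS2closed : IsClosed S2 := by
    have : S2 = ⋂ (g : E) (_ : (0 : Ω → ℝ) ≤ᵐ[μ] g),
        {x' : WeakDual ℝ E | x' g ∈ Set.Icc 0 (∫ ω, g ω ∂μ)} := by
      ext x'; simp [hS2def, Set.mem_iInter]
    rw [this]
    exact isClosed_iInter fun g => isClosed_iInter fun _ =>
      isClosed_Icc.preimage (WeakDual.eval_continuous g)
  have hS3closed : IsClosed S3 := by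
    have : S3 = ⋂ (p : (Fin d → ℝ) × (Ω → Fin d → ℝ)) (hp : p ∈ Z),
        {x' : WeakDual ℝ E | x' ((hGmem p hp).toLp _) ≤ c p} := by
      ext x'; simp [hS3def, Set.mem_iInter]
    rw [this]
    exact isClosed_iInter fun p => isClosed_iInter fun hp =>
      isClosed_Iic.preimage (WeakDual.eval_continuous _)
  set K : Set (WeakDual ℝ E) :=
    (WeakDual.toStrongDual ⁻¹' Metric.closedBall 0 1) ∩ (S2 ∩ S3) with hKdef
  have hKcompact : IsCompact K :=
    (WeakDual.isCompact_closedBall (𝕜 := ℝ) 0 1).inter_right (hS2closed.inter hS3closed)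
  have h0K : (0 : WeakDual ℝ E) ∈ K := by
    refine ⟨?_, ?_, ?_⟩
    · simp [Metric.mem_closedBall]
    · intro g hg
      have h0 : (0 : WeakDual ℝ E) g = 0 := rfl
      rw [h0]
      exact ⟨le_refl 0, integral_nonneg_of_ae hg⟩
    · intro p hp
      have h0 : (0 : WeakDual ℝ E) ((hGmem p hp).toLp _) = 0 := rfl
      rw [h0]
      exact hv₀ p hp
  obtain ⟨T, hTK, hTmax⟩ := hKcompact.exists_isMaxOn ⟨0, h0K⟩
    ((WeakDual.eval_continuous oneE).continuousOn)
  -- Riesz representation of the maximizer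
  set f : E := (InnerProductSpace.toDual ℝ E).symm (WeakDual.toStrongDual T) with hfdef
  have hfT : ∀ g : E, T g = ⟪f, g⟫ := by
    intro g
    have h1 : InnerProductSpace.toDual ℝ E f = WeakDual.toStrongDual T :=
      (InnerProductSpace.toDual ℝ E).apply_symm_apply _
    have h2 : ⟪f, g⟫ = (InnerProductSpace.toDual ℝ E f) g :=
      (InnerProductSpace.toDual_apply_apply).symm
    rw [h2, h1]; rfl
  have hfmeas : Measurable (f : Ω → ℝ) := (Lp.stronglyMeasurable f).measurable
  have hfint : Integrable (f : Ω → ℝ) μ := (Lp.memLp f).integrable one_le_two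
  -- a helper to evaluate T on indicators
  have hTind : ∀ s : Set Ω, MeasurableSet s →
      (∃ gE : E, ((0 : Ω → ℝ) ≤ᵐ[μ] gE) ∧ T gE = ∫ x in s, (f : Ω → ℝ) x ∂μ ∧
        ∫ ω, gE ω ∂μ = (μ s).toReal) := by
    intro s hs
    have hgmeas : Measurable (s.indicator (fun _ => (1 : ℝ))) :=
      measurable_const.indicator hs
    have hgmem : MemLp (s.indicator (fun _ => (1 : ℝ))) 2 μ := by
      refine MemLp.of_bound hgmeas.aestronglyMeasurable 1
        (Filter.Eventually.of_forall fun ω => ?_)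
      rw [Real.norm_eq_abs, Set.indicator_apply]
      split <;> simp
    refine ⟨hgmem.toLp _, ?_, ?_, ?_⟩
    · filter_upwards [hgmem.coeFn_toLp] with ω h
      rw [Pi.zero_apply, h]
      exact Set.indicator_nonneg (fun _ _ => zero_le_one) ω
    · rw [hfT, inner_toLp_eq]
      have : ∀ ω, (f : Ω → ℝ) ω * s.indicator (fun _ => (1 : ℝ)) ω
          = s.indicator (f : Ω → ℝ) ω := by
        intro ω
        by_cases hω : ω ∈ s <;> simp [Set.indicator_apply, hω]
      rw [integral_congr_ae (Filter.Eventually.of_forall this), integral_indicator hs]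
    · rw [integral_congr_ae hgmem.coeFn_toLp, integral_indicator_const _ hs]
      simp [Measure.real]
  -- a.e. bounds for f
  have hf0 : ∀ᵐ ω ∂μ, 0 ≤ (f : Ω → ℝ) ω := by
    set s : Set Ω := {ω | (f : Ω → ℝ) ω < 0} with hsdef
    have hs : MeasurableSet s := measurableSet_lt hfmeas measurable_const
    obtain ⟨gE, hgpos, hTg, _⟩ := hTind s hs
    have h1 : 0 ≤ T gE := (hTK.2.1 gE hgpos).1
    have hnull : μ s = 0 := by
      refine null_of_setIntegral_nonpos (u := fun x => -((f : Ω → ℝ) x)) hs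
        (hfint.neg.integrableOn) ?_ ?_
      · intro x hx; exact neg_pos.2 hx
      · rw [integral_neg, neg_nonpos]
        rw [hTg] at h1; exact h1
    rw [ae_iff]; simpa [hsdef, not_le] using hnull
  have hf1 : ∀ᵐ ω ∂μ, (f : Ω → ℝ) ω ≤ 1 := by
    set s : Set Ω := {ω | 1 < (f : Ω → ℝ) ω} with hsdef
    have hs : MeasurableSet s := measurableSet_lt measurable_const hfmeas
    obtain ⟨gE, hgpos, hTg, hgint⟩ := hTind s hs
    have h1 : T gE ≤ ∫ ω, gE ω ∂μ := (hTK.2.1 gE hgpos).2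
    rw [hTg, hgint] at h1
    have hnull : μ s = 0 := by
      refine null_of_setIntegral_nonpos (u := fun x => ((f : Ω → ℝ) x - 1)) hs
        ((hfint.sub (integrable_const 1)).integrableOn) ?_ ?_
      · intro x hx; exact sub_pos.2 hx
      · rw [integral_sub hfint.integrableOn (integrableOn_const (measure_lt_top μ s).ne)]
        have : ∫ _x in s, (1 : ℝ) ∂μ = (μ s).toReal := by
          rw [setIntegral_const]; simp [Measure.real]
        rw [this]
        linarith
    rw [ae_iff]; simpa [hsdef, not_le] using hnull
  -- the optimal success function
  set φ : Ω → ℝ := fun ω => max 0 (min 1 ((f : Ω → ℝ) ω)) with hφdef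
  have hφmeas : Measurable φ := measurable_const.max (measurable_const.min hfmeas)
  have hφf : φ =ᵐ[μ] (f : Ω → ℝ) := by
    filter_upwards [hf0, hf1] with ω h0 h1
    rw [hφdef]; dsimp only
    rw [min_eq_right h1, max_eq_right h0]
  -- key rearrangement of the constraint integrals
  have hrearr : ∀ (p : (Fin d → ℝ) × (Ω → Fin d → ℝ)) (u : Ω → ℝ) (ω : Ω),
      (∑ i, p.2 ω i * (u ω * H ω i)) = u ω * G p ω := by
    intro p u ω
    rw [hGdef]; dsimp only
    rw [Finset.mul_sum]
    exact Finset.sum_congr rfl fun i _ => by ring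
  have hTint : ∀ p, ∀ hp : p ∈ Z,
      T ((hGmem p hp).toLp _) = ∫ ω, ∑ i, p.2 ω i * (φ ω * H ω i) ∂μ := by
    intro p hp
    rw [hfT, inner_toLp_eq]
    refine (integral_congr_ae ?_).symm
    filter_upwards [hφf] with ω h
    rw [hrearr p φ ω, h]
  have hTone : T oneE = ∫ ω, φ ω ∂μ := by
    rw [hfT, honedef, inner_toLp_eq]
    refine (integral_congr_ae ?_).symm
    filter_upwards [hφf] with ω h
    rw [h, mul_one]
  refine ⟨φ, hφmeas, ?_, ?_, ?_⟩
  · intro ω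
    constructor
    · exact le_max_left _ _
    · exact max_le zero_le_one (min_le_left _ _)
  · intro p hp
    have := hTK.2.2 p hp
    rw [hTint p hp] at this
    exact this
  · -- maximality
    intro ψ hψmeas hψ01 hψc
    have hψmem : MemLp ψ 2 μ := by
      refine MemLp.of_bound hψmeas.aestronglyMeasurable 1
        (Filter.Eventually.of_forall fun ω => ?_)
      rw [Real.norm_eq_abs, abs_le]
      exact ⟨le_trans (by norm_num) (hψ01 ω).1, (hψ01 ω).2⟩
    set ψE : E := hψmem.toLp _ with hψEdef
    set Tψ : WeakDual ℝ E :=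
      StrongDual.toWeakDual (InnerProductSpace.toDual ℝ E ψE) with hTψdef
    have hTψapp : ∀ g : E, Tψ g = ⟪ψE, g⟫ := fun g => rfl
    have hTψK : Tψ ∈ K := by
      refine ⟨?_, ?_, ?_⟩
      · -- norm bound
        have h1 : WeakDual.toStrongDual Tψ = InnerProductSpace.toDual ℝ E ψE := rfl
        rw [Set.mem_preimage, h1, Metric.mem_closedBall, dist_zero_right,
          (InnerProductSpace.toDual ℝ E).norm_map, hψEdef, Lp.norm_toLp]
        have hb : eLpNorm ψ 2 μ ≤ 1 := by
          have := eLpNorm_le_of_ae_bound (μ := μ) (p := 2) (C := 1)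
            (Filter.Eventually.of_forall fun ω => by
              rw [Real.norm_eq_abs, abs_le]
              exact ⟨le_trans (by norm_num) (hψ01 ω).1, (hψ01 ω).2⟩)
          simpa using this
        calc (eLpNorm ψ 2 μ).toReal ≤ (1 : ℝ≥0∞).toReal :=
              ENNReal.toReal_mono ENNReal.one_ne_top hb
          _ = 1 := by simp
      · -- box constraints
        intro g hg
        rw [hTψapp, hψEdef]
        have hinner : ⟪hψmem.toLp ψ, g⟫ = ∫ ω, ψ ω * g ω ∂μ := by
          rw [L2inner_eq]
          exact integral_congr_ae ((hψmem.coeFn_toLp).mono fun ω h => by simp only [h])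
        rw [hinner]
        have hgint : Integrable (g : Ω → ℝ) μ := (Lp.memLp g).integrable one_le_two
        have hψgint : Integrable (fun ω => ψ ω * g ω) μ := by
          refine hgint.bdd_mul hψmeas.aestronglyMeasurable
            (c := 1) (Filter.Eventually.of_forall fun ω => ?_)
          rw [Real.norm_eq_abs, abs_le]
          exact ⟨le_trans (by norm_num) (hψ01 ω).1, (hψ01 ω).2⟩
        constructor
        · refine integral_nonneg_of_ae ?_
          filter_upwards [hg] with ω hω
          exact mul_nonneg (hψ01 ω).1 hω
        · refine integral_mono_ae hψgint hgint ?_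
          filter_upwards [hg] with ω hω
          calc ψ ω * g ω ≤ 1 * g ω := mul_le_mul_of_nonneg_right (hψ01 ω).2 hω
            _ = g ω := one_mul _
      · -- Z constraints
        intro p hp
        rw [hTψapp, hψEdef, toLp_inner_toLp]
        have : ∫ ω, ψ ω * G p ω ∂μ = ∫ ω, ∑ i, p.2 ω i * (ψ ω * H ω i) ∂μ :=
          integral_congr_ae (Filter.Eventually.of_forall fun ω => (hrearr p ψ ω).symm)
        rw [this]
        exact hψc p hp
    have hle : Tψ oneE ≤ T oneE := hTmax hTψK
    have hψval : Tψ oneE = ∫ ω, ψ ω ∂μ := by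
      rw [hTψapp, hψEdef, honedef, toLp_inner_toLp]
      simp
    rw [hψval, hTone] at hle
    exact hle
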